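/- Let $X \subseteq \mathcal{A}^{\mathbb{Z}^d}$ be a topologically mixing subshift, $G$ a finitely generated group with word metric, and $c : X \times \mathbb{Z}^d \to G$ a continuous cocycle (i.e., $c(x, v+w) = c(x,v) \, c(\sigma^v x, w)$). Suppose there is an infinite subset $C \subseteq \mathbb{Z}^d$ such that $c(x,v)$ has infinite order in $G$ for every $x \in X$ and $v \in C$. Then the set $\{c(x,v) : x \in X, v \in \mathbb{Z}^d\}$ is unbounded in $G$. -/

import Mathlib

/-- Word length of `g` with respect to a generating set `S`. -/
noncomputable def wordLength {G : Type*} [Group G] (S : Set G) (g : G) : ℕ :=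
  sInf {n : ℕ | ∃ f : Fin n → G, (∀ i, f i ∈ S) ∧ (List.ofFn f).prod = g}

section Aux

variable {G : Type*} [Group G]

lemma wordLength_set_nonempty (S₀ : Set G) (hsym : ∀ s ∈ S₀, s⁻¹ ∈ S₀)
    (hgen : Subgroup.closure S₀ = ⊤) (g : G) :
    {n : ℕ | ∃ f : Fin n → G, (∀ i, f i ∈ S₀) ∧ (List.ofFn f).prod = g}.Nonempty := by
  have hg : g ∈ Subgroup.closure S₀ := by rw [hgen]; trivial
  have hlist : ∃ l : List G, (∀ a ∈ l, a ∈ S₀) ∧ l.prod = g := by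
    induction hg using Subgroup.closure_induction with
    | mem x hx => exact ⟨[x], by simpa using hx, by simp⟩
    | one => exact ⟨[], by simp, by simp⟩
    | mul x y hx hy ihx ihy =>
        obtain ⟨l₁, h₁, p₁⟩ := ihx
        obtain ⟨l₂, h₂, p₂⟩ := ihy
        refine ⟨l₁ ++ l₂, ?_, by simp [p₁, p₂]⟩
        intro a ha
        rcases List.mem_append.mp ha with h | h
        · exact h₁ a h
        · exact h₂ a h
    | inv x hx ihx =>
        obtain ⟨l, h, p⟩ := ihx
        refine ⟨(l.map fun a => a⁻¹).reverse, ?_, ?_⟩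
        · intro a ha
          simp only [List.mem_reverse, List.mem_map] at ha
          obtain ⟨b, hb, rfl⟩ := ha
          exact hsym b (h b hb)
        · rw [← p, List.prod_inv_reverse]
  obtain ⟨l, hl, hp⟩ := hlist
  refine ⟨l.length, l.get, fun i => hl _ (l.get_mem ..), ?_⟩
  rw [List.ofFn_get]
  exact hp

lemma finite_ball (S₀ : Set G) (hfin : S₀.Finite) (hsym : ∀ s ∈ S₀, s⁻¹ ∈ S₀)
    (hgen : Subgroup.closure S₀ = ⊤) (M : ℕ) :
    {g : G | wordLength S₀ g ≤ M}.Finite := by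
  have hP : ∀ n : ℕ,
      {g : G | ∃ f : Fin n → G, (∀ i, f i ∈ S₀) ∧ (List.ofFn f).prod = g}.Finite := by
    intro n
    have heq : {g : G | ∃ f : Fin n → G, (∀ i, f i ∈ S₀) ∧ (List.ofFn f).prod = g}
        = (fun f : Fin n → G => (List.ofFn f).prod) '' (Set.pi Set.univ fun _ => S₀) := by
      ext g
      simp [Set.mem_pi, eq_comm]
    rw [heq]
    exact (Set.Finite.pi fun _ => hfin).image _
  apply Set.Finite.subset
    (Set.Finite.biUnion (Finset.range (M + 1)).finite_toSet fun n _ => hP n)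
  intro g hg
  have hmem := Nat.sInf_mem (wordLength_set_nonempty S₀ hsym hgen g)
  exact Set.mem_biUnion (by simpa [Finset.mem_range, wordLength] using Nat.lt_succ_of_le hg) hmem

lemma exists_big {d : ℕ} (C : Set (Fin d → ℤ)) (hC : C.Infinite) (n : ℕ) :
    ∃ v ∈ C, ∃ i, (n : ℤ) < |v i| := by
  by_contra h
  push_neg at h
  apply hC
  apply (Set.Finite.pi fun _ : Fin d => Set.finite_Icc (-(n : ℤ)) n).subset
  intro v hv
  rw [Set.mem_univ_pi]
  intro i
  rw [Set.mem_Icc]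
  exact abs_le.mp (h v hv i)

variable {A : Type*} {d : ℕ}

/-- The set of "asymptotic cocycle values at `x`": elements `t` such that for every finite
window `D` there are `y ∈ X` and `v` with `σ^v y` agreeing with `x` on `D` and `c y v = t`. -/
def Phi (X : Set ((Fin d → ℤ) → A)) (c : ((Fin d → ℤ) → A) → (Fin d → ℤ) → G)
    (x : (Fin d → ℤ) → A) : Set G :=
  {t | ∀ D : Finset (Fin d → ℤ), ∃ y ∈ X, ∃ v : Fin d → ℤ,
    (∀ s ∈ D, y (s + v) = x s) ∧ c y v = t}

lemma exists_window [TopologicalSpace A] [DiscreteTopology A]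
    [TopologicalSpace G] [DiscreteTopology G]
    {X : Set ((Fin d → ℤ) → A)} {c : ((Fin d → ℤ) → A) → (Fin d → ℤ) → G}
    (hcont : ∀ v : Fin d → ℤ, ContinuousOn (fun x => c x v) X)
    (u : Fin d → ℤ) {x : (Fin d → ℤ) → A} (hx : x ∈ X) :
    ∃ W : Finset (Fin d → ℤ), ∀ x' ∈ X, (∀ s ∈ W, x' s = x s) → c x' u = c x u := by
  have h1 : ContinuousWithinAt (fun x => c x u) X x := (hcont u) x hx
  have h2 : {c x u} ∈ nhds (c x u) := by
    rw [nhds_discrete]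
    simp
  have h3 : (fun x' => c x' u) ⁻¹' {c x u} ∈ nhdsWithin x X := h1 h2
  rw [mem_nhdsWithin] at h3
  obtain ⟨U, hUopen, hxU, hU⟩ := h3
  obtain ⟨I, uu, huu, hsub⟩ := isOpen_pi_iff.mp hUopen x hxU
  refine ⟨I, fun x' hx' hagree => ?_⟩
  have hmem : x' ∈ U := hsub fun i hi => by
    rw [hagree i (Finset.mem_coe.mp hi)]
    exact (huu i (Finset.mem_coe.mp hi)).2
  have := hU ⟨hmem, hx'⟩
  simpa using this

lemma c_zero {X : Set ((Fin d → ℤ) → A)} {c : ((Fin d → ℤ) → A) → (Fin d → ℤ) → G}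
    (hcoc : ∀ x ∈ X, ∀ v w : Fin d → ℤ,
      c x (v + w) = c x v * c (fun u => x (u + v)) w)
    {x : (Fin d → ℤ) → A} (hx : x ∈ X) : c x 0 = 1 := by
  have h := hcoc x hx 0 0
  simp only [add_zero] at h
  exact left_eq_mul.mp h

lemma phi_shift [TopologicalSpace A] [DiscreteTopology A]
    [TopologicalSpace G] [DiscreteTopology G]
    {X : Set ((Fin d → ℤ) → A)} {c : ((Fin d → ℤ) → A) → (Fin d → ℤ) → G}
    (hshift : ∀ x ∈ X, ∀ v : Fin d → ℤ, (fun u => x (u + v)) ∈ X)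
    (hcont : ∀ v : Fin d → ℤ, ContinuousOn (fun x => c x v) X)
    (hcoc : ∀ x ∈ X, ∀ v w : Fin d → ℤ,
      c x (v + w) = c x v * c (fun u => x (u + v)) w)
    {x : (Fin d → ℤ) → A} (hx : x ∈ X) (u : Fin d → ℤ) {t : G} (ht : t ∈ Phi X c x) :
    t * c x u ∈ Phi X c (fun s => x (s + u)) := by
  intro D
  obtain ⟨W, hW⟩ := exists_window hcont u hx
  classical
  obtain ⟨y, hy, v, hag, hcv⟩ := ht (D.image (· + u) ∪ W)
  refine ⟨y, hy, v + u, ?_, ?_⟩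
  · intro s hs
    have e : s + (v + u) = (s + u) + v := by ring
    rw [e, hag (s + u) (Finset.mem_union_left _ (Finset.mem_image_of_mem _ hs))]
  · have hyX : (fun s => y (s + v)) ∈ X := hshift y hy v
    have hyx : ∀ s ∈ W, y (s + v) = x s := fun s hs =>
      hag s (Finset.mem_union_right _ hs)
    have hval : c (fun s => y (s + v)) u = c x u := hW _ hyX hyx
    rw [hcoc y hy v u, hval, hcv]

end Aux

/-- Let `X ⊆ 𝒜^{ℤ^d}` be a (nonempty) topologically mixing subshift, `G` a
finitely generated group with word metric, and `c : X × ℤ^d → G` a continuous cocycle.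
If there is an infinite set `C ⊆ ℤ^d` such that `c x v` has infinite order for every
`x ∈ X` and `v ∈ C`, then `{c x v : x ∈ X, v ∈ ℤ^d}` is unbounded in `G`. -/
theorem mixing_cocycle_unbounded {A : Type*} [Fintype A]
    [TopologicalSpace A] [DiscreteTopology A] (d : ℕ)
    {G : Type*} [Group G] [TopologicalSpace G] [DiscreteTopology G]
    (S₀ : Set G) (hS₀fin : S₀.Finite) (hS₀sym : ∀ s ∈ S₀, s⁻¹ ∈ S₀)
    (hS₀gen : Subgroup.closure S₀ = ⊤)
    (X : Set ((Fin d → ℤ) → A)) (hne : X.Nonempty) (hclosed : IsClosed X)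
    (hshift : ∀ x ∈ X, ∀ v : Fin d → ℤ, (fun u => x (u + v)) ∈ X)
    (hmix : ∀ x ∈ X, ∀ y ∈ X, ∀ F : Finset (Fin d → ℤ), ∃ n : ℕ,
      ∀ v : Fin d → ℤ, (∃ i, (n : ℤ) < |v i|) →
        ∃ z ∈ X, (∀ u ∈ F, z u = y u) ∧ ∀ u ∈ F, z (u + v) = x u)
    (c : ((Fin d → ℤ) → A) → (Fin d → ℤ) → G)
    (hcont : ∀ v : Fin d → ℤ, ContinuousOn (fun x => c x v) X)
    (hcoc : ∀ x ∈ X, ∀ v w : Fin d → ℤ,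
      c x (v + w) = c x v * c (fun u => x (u + v)) w)
    (C : Set (Fin d → ℤ)) (hCinf : C.Infinite)
    (hord : ∀ x ∈ X, ∀ v ∈ C, ¬ IsOfFinOrder (c x v)) :
    ∀ M : ℕ, ∃ x ∈ X, ∃ v : Fin d → ℤ, M < wordLength S₀ (c x v) := by
  classical
  intro M
  by_contra hcon
  push_neg at hcon
  -- `hcon : ∀ x ∈ X, ∀ v, wordLength S₀ (c x v) ≤ M`
  set B : Set G := {g | wordLength S₀ g ≤ M} with hB
  have hBfin : B.Finite := finite_ball S₀ hS₀fin hS₀sym hS₀gen M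
  have hPhiSub : ∀ x ∈ X, Phi X c x ⊆ B := by
    intro x hx t ht
    obtain ⟨y, hy, v, -, rfl⟩ := ht ∅
    exact hcon y hy v
  have hPhiFin : ∀ x ∈ X, (Phi X c x).Finite := fun x hx =>
    hBfin.subset (hPhiSub x hx)
  have honeMem : ∀ x ∈ X, (1 : G) ∈ Phi X c x := by
    intro x hx D
    exact ⟨x, hx, 0, fun s _ => by rw [add_zero], c_zero hcoc hx⟩
  -- pick a point with minimal `Phi`-cardinality
  set K : Set ℕ := {k | ∃ x ∈ X, (Phi X c x).ncard = k} with hK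
  have hKne : K.Nonempty := ⟨(Phi X c hne.choose).ncard, hne.choose, hne.choose_spec, rfl⟩
  obtain ⟨y₀, hy₀, hN⟩ := Nat.sInf_mem hKne
  -- upper semicontinuity: a finite window around `y₀` forces `Phi ⊆ Phi y₀`
  have hclaim : ∀ t : G, ∃ Dt : Finset (Fin d → ℤ), t ∉ Phi X c y₀ →
      ∀ z ∈ X, (∀ s ∈ Dt, z s = y₀ s) → t ∉ Phi X c z := by
    intro t
    by_cases hty : t ∈ Phi X c y₀
    · exact ⟨∅, fun h => absurd hty h⟩
    · by_contra hno
      push_neg at hno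
      apply hty
      intro D
      obtain ⟨-, z, hz, hzag, htz⟩ := hno D
      obtain ⟨y, hy, v, hag, hcv⟩ := htz D
      exact ⟨y, hy, v, fun s hs => by rw [hag s hs, hzag s hs], hcv⟩
  choose Dt hDt using hclaim
  have hdiffFin : (B \ Phi X c y₀).Finite := hBfin.diff
  set D₀ : Finset (Fin d → ℤ) := hdiffFin.toFinset.biUnion Dt with hD₀
  have husc : ∀ z ∈ X, (∀ s ∈ D₀, z s = y₀ s) → Phi X c z ⊆ Phi X c y₀ := by
    intro z hz hagree t ht
    by_contra htn
    have htB : t ∈ B := hPhiSub z hz ht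
    have htd : t ∈ hdiffFin.toFinset := hdiffFin.mem_toFinset.mpr ⟨htB, htn⟩
    refine hDt t htn z hz (fun s hs => hagree s ?_) ht
    exact Finset.mem_biUnion.mpr ⟨t, htd, hs⟩
  -- apply mixing with a large vector from C
  obtain ⟨n, hn⟩ := hmix y₀ hy₀ y₀ hy₀ D₀
  obtain ⟨v, hvC, hvbig⟩ := exists_big C hCinf n
  obtain ⟨z, hz, hz1, hz2⟩ := hn v hvbig
  have hPhiy₀Fin : (Phi X c y₀).Finite := hPhiFin y₀ hy₀
  have hzEq : Phi X c z = Phi X c y₀ := by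
    refine Set.eq_of_subset_of_ncard_le (husc z hz hz1) ?_ hPhiy₀Fin
    rw [hN]
    exact Nat.sInf_le ⟨z, hz, rfl⟩
  have hz'X : (fun s => z (s + v)) ∈ X := hshift z hz v
  have hz'Eq : Phi X c (fun s => z (s + v)) = Phi X c y₀ := by
    refine Set.eq_of_subset_of_ncard_le (husc _ hz'X fun s hs => hz2 s hs) ?_ hPhiy₀Fin
    rw [hN]
    exact Nat.sInf_le ⟨_, hz'X, rfl⟩
  -- powers of `c z v` all lie in the finite set `Phi y₀`
  have hpow : ∀ k : ℕ, (c z v) ^ k ∈ Phi X c y₀ := by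
    intro k
    induction k with
    | zero => simpa using honeMem y₀ hy₀
    | succ k ih =>
        have ih' : (c z v) ^ k ∈ Phi X c z := hzEq ▸ ih
        have step := phi_shift hshift hcont hcoc hz v ih'
        rw [hz'Eq] at step
        rw [pow_succ]
        exact step
  -- pigeonhole ⇒ finite order, contradiction
  obtain ⟨i, -, j, -, hij, heq⟩ :=
    Set.infinite_univ.exists_ne_map_eq_of_mapsTo
      (f := fun k : ℕ => (c z v) ^ k) (fun k _ => hpow k) hPhiy₀Fin
  have key : ∀ i j : ℕ, i < j → (c z v) ^ i = (c z v) ^ j → IsOfFinOrder (c z v) := by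
    intro i j hlt he
    refine isOfFinOrder_iff_pow_eq_one.mpr ⟨j - i, Nat.sub_pos_of_lt hlt, ?_⟩
    have h1 : (c z v) ^ i * (c z v) ^ (j - i) = (c z v) ^ i * 1 := by
      rw [mul_one, ← pow_add, Nat.add_sub_cancel' hlt.le]
      exact he.symm
    exact mul_left_cancel h1
  rcases hij.lt_or_gt with h | h
  · exact hord z hz v hvC (key i j h heq)
  · exact hord z hz v hvC (key j i h heq.symm)
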